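/- arXiv:1103.5861 — 5 statements merged into one kernel-verified Lean document; each statement's English description precedes it below -/
import Mathlib

section
/- Let a₁, a₂ ∈ ℤ, let m₁, m₂ ∈ ℕ, m := lcm[m₁, m₂], and M ∈ ℕ with m ∣ M. Then (1/φ(M)) · ∑_{1 ≤ k ≤ M, gcd(k,M)=1} gcd(k − a₁, m₁) · gcd(k − a₂, m₂) = ∑ φ(gcd(d₁, d₂)), where the sum is over pairs (d₁, d₂) with d₁ ∣ m₁, d₂ ∣ m₂, gcd(d₁, a₁) = 1, gcd(d₂, a₂) = 1, and gcd(d₁, d₂) ∣ a₁ − a₂. -/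
open Finset

lemma gcd_sum_aux (m : ℕ) (hm : 0 < m) (n : ℤ) :
    (Int.gcd n m : ℕ) = ∑ d ∈ m.divisors.filter (fun d : ℕ => (d:ℤ) ∣ n), d.totient := by
  have h : m.divisors.filter (fun d : ℕ => (d:ℤ) ∣ n) = (Int.gcd n m).divisors := by
    ext d
    simp only [Nat.mem_divisors, Finset.mem_filter]
    constructor
    · rintro ⟨⟨hdm, -⟩, hdn⟩
      refine ⟨?_, ?_⟩
      · rw [Int.natCast_dvd_natCast.symm, Int.coe_gcd]
        exact dvd_gcd hdn (Int.natCast_dvd_natCast.mpr hdm)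
      · simp [Int.gcd_eq_zero_iff]
        intro _ h2
        omega
    · rintro ⟨hd, hne⟩
      have h1 : (d:ℤ) ∣ Int.gcd n m := Int.natCast_dvd_natCast.mpr hd
      rw [Int.coe_gcd] at h1
      exact ⟨⟨Int.natCast_dvd_natCast.mp (h1.trans (gcd_dvd_right n m)), hm.ne'⟩,
        h1.trans (gcd_dvd_left n m)⟩
  rw [h, Nat.sum_totient]

lemma fiber_card {G H : Type*} [Group G] [Group H] [Fintype G] [Fintype H]
    [DecidableEq G] [DecidableEq H]
    (f : G →* H) (hf : Function.Surjective f) (y : H) :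
    (univ.filter (fun x => f x = y)).card * Fintype.card H = Fintype.card G := by
  have key : ∀ y : H, (univ.filter (fun x => f x = y)).card
      = (univ.filter (fun x => f x = 1)).card := by
    intro y
    obtain ⟨x₀, hx₀⟩ := hf y
    apply Finset.card_bij' (fun x _ => x * x₀⁻¹) (fun x _ => x * x₀)
    · intro a ha
      simp only [mem_filter, mem_univ, true_and] at ha ⊢
      simp [map_mul, ha, hx₀]
    · intro a ha
      simp only [mem_filter, mem_univ, true_and] at ha ⊢
      simp [map_mul, ha, hx₀]
    · intros; simp
    · intros; simp
  have h2 : Fintype.card G = ∑ z ∈ (univ : Finset H), (univ.filter (fun x => f x = z)).card := by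
    rw [← Finset.card_univ]
    exact Finset.card_eq_sum_card_fiberwise (fun x _ => Finset.mem_univ (f x))
  rw [key y, h2]
  rw [Finset.sum_congr rfl (fun z _ => key z), Finset.sum_const, Finset.card_univ, smul_eq_mul,
    mul_comm]

lemma tot_lcm (a b : ℕ) (ha : 0 < a) (hb : 0 < b) :
    Nat.totient (Nat.gcd a b) * Nat.totient (Nat.lcm a b) = Nat.totient a * Nat.totient b := by
  have h1 := Nat.totient_gcd_mul_totient_mul a b
  have h2 := Nat.totient_gcd_mul_totient_mul (Nat.gcd a b) (Nat.lcm a b)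
  rw [Nat.gcd_eq_left ((Nat.gcd_dvd_left a b).trans (Nat.dvd_lcm_left a b)),
    Nat.gcd_mul_lcm] at h2
  have hg : 0 < Nat.gcd a b := Nat.gcd_pos_of_pos_left b ha
  have := h1.symm.trans h2
  exact Nat.eq_of_mul_eq_mul_right hg (by linarith)


lemma count_res (M L : ℕ) (hM : 0 < M) (hL : 0 < L) (hLM : L ∣ M) (b : ℤ)
    (hb : IsCoprime b (L:ℤ)) :
    ((Finset.Icc 1 M).filter
        (fun k => Nat.gcd k M = 1 ∧ (L:ℤ) ∣ (k:ℤ) - b)).card * Nat.totient L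
      = Nat.totient M := by
  haveI : NeZero M := ⟨hM.ne'⟩
  haveI : NeZero L := ⟨hL.ne'⟩
  set bL : ZMod L := (b : ZMod L) with hbL
  have hbu : IsUnit bL := by
    obtain ⟨u, v, huv⟩ := hb
    refine IsUnit.of_mul_eq_one (a := bL) (u : ZMod L) ?_
    have := congrArg (fun z : ℤ => (z : ZMod L)) huv
    push_cast at this
    simpa [ZMod.natCast_self, mul_comm] using this
  have step1 : ((Finset.Icc 1 M).filter
        (fun k => Nat.gcd k M = 1 ∧ (L:ℤ) ∣ (k:ℤ) - b)).card
      = ((univ : Finset (ZMod M)).filter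
        (fun x => IsUnit x ∧ ZMod.castHom hLM (ZMod L) x = bL)).card := by
    have cond_iff : ∀ k : ℕ, (Nat.gcd k M = 1 ∧ (L:ℤ) ∣ (k:ℤ) - b) ↔
        (IsUnit ((k : ZMod M)) ∧ ZMod.castHom hLM (ZMod L) ((k : ZMod M)) = bL) := by
      intro k
      rw [ZMod.isUnit_iff_coprime]
      have h1 : ZMod.castHom hLM (ZMod L) ((k : ZMod M)) = ((k:ℤ) : ZMod L) := by
        push_cast
        simp [map_natCast]
      rw [h1, hbL, ZMod.intCast_eq_intCast_iff, Int.modEq_iff_dvd, dvd_sub_comm]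
    refine Finset.card_nbij' (fun k => (k : ZMod M))
      (fun x => if x = 0 then M else x.val) ?_ ?_ ?_ ?_
    · intro k hk
      simp only [Finset.mem_coe, mem_filter, mem_univ, true_and] at hk ⊢
      exact (cond_iff k).mp hk.2
    · intro x hx
      simp only [Finset.mem_coe, mem_filter, mem_univ, true_and] at hx
      have hcast : (((if x = 0 then M else x.val) : ℕ) : ZMod M) = x := by
        split
        next h0 => rw [ZMod.natCast_self, h0]
        next h0 => simp [ZMod.natCast_val, ZMod.cast_id]
      simp only [Finset.mem_coe, mem_filter]
      refine ⟨?_, (cond_iff _).mpr (by rw [hcast]; exact hx)⟩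
      simp only [Finset.mem_Icc]
      split
      · omega
      · have hval : x.val < M := ZMod.val_lt x
        have h2 : x.val ≠ 0 := by
          rw [Ne, ZMod.val_eq_zero]; assumption
        omega
    · intro k hk
      simp only [Finset.mem_coe, mem_filter, Finset.mem_Icc] at hk
      dsimp only
      by_cases h : (k : ZMod M) = 0
      · rw [if_pos h]
        have hd := (ZMod.natCast_eq_zero_iff k M).mp h
        have := Nat.le_of_dvd (by omega) hd
        omega
      · rw [if_neg h, ZMod.val_natCast]
        have hkM : k ≠ M := fun he => h (by rw [he]; exact ZMod.natCast_self M)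
        exact Nat.mod_eq_of_lt (by omega)
    · intro x hx
      dsimp only
      split
      next h0 => rw [ZMod.natCast_self, h0]
      next h0 => simp [ZMod.natCast_val, ZMod.cast_id]
  have step2 : ((univ : Finset (ZMod M)).filter
        (fun x => IsUnit x ∧ ZMod.castHom hLM (ZMod L) x = bL)).card
      = ((univ : Finset (ZMod M)ˣ).filter
        (fun u => ZMod.unitsMap hLM u = hbu.unit)).card := by
    refine Finset.card_nbij' (fun x => if h : IsUnit x then h.unit else 1)
      (fun u => (u : ZMod M)) ?_ ?_ ?_ ?_
    · intro x hx
      simp only [Finset.mem_coe, mem_filter, mem_univ, true_and] at hx ⊢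
      rw [dif_pos hx.1]
      rw [Units.ext_iff]
      show ((ZMod.unitsMap hLM) hx.1.unit : ZMod L) = (hbu.unit : ZMod L)
      rw [ZMod.unitsMap, Units.coe_map, IsUnit.unit_spec, IsUnit.unit_spec]
      exact hx.2
    · intro u hu
      simp only [Finset.mem_coe, mem_filter, mem_univ, true_and] at hu ⊢
      refine ⟨u.isUnit, ?_⟩
      have := congrArg (fun w : (ZMod L)ˣ => (w : ZMod L)) hu
      simpa [ZMod.unitsMap, Units.coe_map] using this
    · intro x hx
      simp only [Finset.mem_coe, mem_filter, mem_univ, true_and] at hx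
      dsimp only
      rw [dif_pos hx.1, IsUnit.unit_spec]
    · intro u hu
      dsimp only
      rw [dif_pos u.isUnit]
      exact Units.ext (IsUnit.unit_spec u.isUnit)
  rw [step1, step2, ← ZMod.card_units_eq_totient L, ← ZMod.card_units_eq_totient M]
  exact fiber_card (ZMod.unitsMap hLM) (ZMod.unitsMap_surjective hLM) hbu.unit

theorem stmt13 (a₁ a₂ : ℤ) (m₁ m₂ : ℕ) (h₁ : 0 < m₁) (h₂ : 0 < m₂)
    (M : ℕ) (hM0 : 0 < M) (hM : Nat.lcm m₁ m₂ ∣ M) :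
    (1 / (Nat.totient M : ℚ)) *
        ∑ k ∈ (Finset.Icc 1 M).filter (fun k => Nat.gcd k M = 1),
          ((Int.gcd ((k : ℤ) - a₁) m₁ * Int.gcd ((k : ℤ) - a₂) m₂ : ℕ) : ℚ) =
      ∑ p ∈ (m₁.divisors ×ˢ m₂.divisors).filter
          (fun p => Int.gcd a₁ p.1 = 1 ∧ Int.gcd a₂ p.2 = 1 ∧
            ((Nat.gcd p.1 p.2 : ℤ) ∣ a₁ - a₂)),
        (Nat.totient (Nat.gcd p.1 p.2) : ℚ) := by
  classical
  have hm₁M : m₁ ∣ M := (Nat.dvd_lcm_left m₁ m₂).trans hM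
  have hm₂M : m₂ ∣ M := (Nat.dvd_lcm_right m₁ m₂).trans hM
  have hφM : (Nat.totient M : ℚ) ≠ 0 := by
    exact_mod_cast (Nat.totient_pos.mpr hM0).ne'
  rw [one_div, inv_mul_eq_iff_eq_mul₀ hφM]
  set R := (Finset.Icc 1 M).filter (fun k => Nat.gcd k M = 1) with hR
  set D := m₁.divisors ×ˢ m₂.divisors with hD
  set cond : ℕ × ℕ → Prop := fun p => Int.gcd a₁ p.1 = 1 ∧ Int.gcd a₂ p.2 = 1 ∧
      ((Nat.gcd p.1 p.2 : ℤ) ∣ a₁ - a₂) with hcond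
  -- key per-pair computation
  have key : ∀ p ∈ D,
      ((Nat.totient p.1 : ℚ) * (Nat.totient p.2 : ℚ)) *
        ((R.filter (fun k : ℕ => (p.1:ℤ) ∣ (k:ℤ) - a₁ ∧ (p.2:ℤ) ∣ (k:ℤ) - a₂)).card : ℚ)
      = if cond p then (Nat.totient (Nat.gcd p.1 p.2) : ℚ) * (Nat.totient M : ℚ) else 0 := by
    rintro ⟨d₁, d₂⟩ hp
    rw [hD, Finset.mem_product, Nat.mem_divisors, Nat.mem_divisors] at hp
    obtain ⟨⟨hd₁, -⟩, hd₂, -⟩ := hp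
    dsimp only at hd₁ hd₂ ⊢
    have hd₁0 : 0 < d₁ := Nat.pos_of_dvd_of_pos hd₁ h₁
    have hd₂0 : 0 < d₂ := Nat.pos_of_dvd_of_pos hd₂ h₂
    have hd₁M : d₁ ∣ M := hd₁.trans hm₁M
    have hd₂M : d₂ ∣ M := hd₂.trans hm₂M
    by_cases hc : cond (d₁, d₂)
    · rw [if_pos hc]
      obtain ⟨hc₁, hc₂, hc₃⟩ := hc
      dsimp only [hcond] at hc₁ hc₂ hc₃
      -- CRT : construct b
      obtain ⟨t, ht⟩ := hc₃
      set u := Int.gcdA (d₁:ℤ) (d₂:ℤ) with hu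
      set v := Int.gcdB (d₁:ℤ) (d₂:ℤ) with hv
      have hbez : ((Nat.gcd d₁ d₂ : ℕ) : ℤ) = d₁ * u + d₂ * v := by
        rw [← Int.gcd_natCast_natCast]
        exact Int.gcd_eq_gcd_ab (d₁:ℤ) (d₂:ℤ)
      set b : ℤ := a₁ - (d₁:ℤ) * u * t with hb
      have hba₁ : (d₁:ℤ) ∣ b - a₁ := ⟨-(u*t), by rw [hb]; ring⟩
      have hba₂ : (d₂:ℤ) ∣ b - a₂ := ⟨v * t, by
        have h5 : a₁ - a₂ = ((d₁:ℤ) * u + (d₂:ℤ) * v) * t := by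
          rw [← hbez]; exact_mod_cast ht
        rw [hb]; linarith⟩
      set L := Nat.lcm d₁ d₂ with hL
      have hL0 : 0 < L := Nat.pos_of_ne_zero (Nat.lcm_ne_zero hd₁0.ne' hd₂0.ne')
      have hLM : L ∣ M := (Nat.lcm_dvd (hd₁.trans (Nat.dvd_lcm_left m₁ m₂))
        (hd₂.trans (Nat.dvd_lcm_right m₁ m₂))).trans hM
      -- b coprime to L
      have hcb : IsCoprime b (L:ℤ) := by
        have h1 : IsCoprime b (d₁:ℤ) := by
          obtain ⟨s, hs⟩ := hba₁
          have := Int.isCoprime_iff_gcd_eq_one.mpr hc₁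
          have hbeq : b = a₁ + (d₁:ℤ) * s := by linarith [hs]
          rw [hbeq]
          exact IsCoprime.add_mul_left_left this s
        have h2 : IsCoprime b (d₂:ℤ) := by
          obtain ⟨s, hs⟩ := hba₂
          have := Int.isCoprime_iff_gcd_eq_one.mpr hc₂
          have hbeq : b = a₂ + (d₂:ℤ) * s := by linarith [hs]
          rw [hbeq]
          exact IsCoprime.add_mul_left_left this s
        have h3 : IsCoprime b ((d₁:ℤ) * d₂) := h1.mul_right h2
        exact IsCoprime.of_isCoprime_of_dvd_right h3
          (Int.natCast_dvd_natCast.mpr (Nat.lcm_dvd_mul d₁ d₂))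
      -- predicate equality
      have hpred : ∀ k : ℕ, ((d₁:ℤ) ∣ (k:ℤ) - a₁ ∧ (d₂:ℤ) ∣ (k:ℤ) - a₂) ↔ ((L:ℤ) ∣ (k:ℤ) - b) := by
        intro k
        constructor
        · rintro ⟨hk₁, hk₂⟩
          have e₁ : (d₁:ℤ) ∣ (k:ℤ) - b := by
            have := dvd_sub hk₁ hba₁
            simpa [sub_sub_sub_cancel_right] using this
          have e₂ : (d₂:ℤ) ∣ (k:ℤ) - b := by
            have := dvd_sub hk₂ hba₂
            simpa [sub_sub_sub_cancel_right] using this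
          have h7 : ((Nat.lcm d₁ d₂ : ℕ) : ℤ) = lcm (d₁:ℤ) (d₂:ℤ) := by
            rw [← Int.coe_lcm]; simp [Int.lcm]
          rw [hL, h7]
          exact lcm_dvd e₁ e₂
        · intro hk
          have e₁ : (d₁:ℤ) ∣ (k:ℤ) - b :=
            (Int.natCast_dvd_natCast.mpr (Nat.dvd_lcm_left d₁ d₂)).trans hk
          have e₂ : (d₂:ℤ) ∣ (k:ℤ) - b :=
            (Int.natCast_dvd_natCast.mpr (Nat.dvd_lcm_right d₁ d₂)).trans hk
          constructor
          · have := dvd_add e₁ hba₁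
            simpa [sub_add_sub_cancel] using this
          · have := dvd_add e₂ hba₂
            simpa [sub_add_sub_cancel] using this
      have hcount := count_res M L hM0 hL0 hLM b hcb
      have hfilter : R.filter (fun k : ℕ => (d₁:ℤ) ∣ (k:ℤ) - a₁ ∧ (d₂:ℤ) ∣ (k:ℤ) - a₂)
          = (Finset.Icc 1 M).filter (fun k => Nat.gcd k M = 1 ∧ (L:ℤ) ∣ (k:ℤ) - b) := by
        rw [hR, Finset.filter_filter]
        exact Finset.filter_congr (fun k _ => by rw [hpred k])

      rw [hfilter]
      -- now the numeric identity
      have htot := tot_lcm d₁ d₂ hd₁0 hd₂0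
      have : (Nat.totient d₁) * (Nat.totient d₂) *
          ((Finset.Icc 1 M).filter (fun k => Nat.gcd k M = 1 ∧ (L:ℤ) ∣ (k:ℤ) - b)).card
          = Nat.totient (Nat.gcd d₁ d₂) * Nat.totient M := by
        calc Nat.totient d₁ * Nat.totient d₂ *
              ((Finset.Icc 1 M).filter (fun k => Nat.gcd k M = 1 ∧ (L:ℤ) ∣ (k:ℤ) - b)).card
            = Nat.totient (Nat.gcd d₁ d₂) *
              (((Finset.Icc 1 M).filter (fun k => Nat.gcd k M = 1 ∧ (L:ℤ) ∣ (k:ℤ) - b)).card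
                * Nat.totient L) := by rw [← htot]; ring
          _ = _ := by rw [hcount]
      exact_mod_cast congrArg (fun n : ℕ => (n : ℚ)) this
    · rw [if_neg hc]
      have hempty : R.filter (fun k : ℕ => (d₁:ℤ) ∣ (k:ℤ) - a₁ ∧ (d₂:ℤ) ∣ (k:ℤ) - a₂) = ∅ := by
        rw [Finset.filter_eq_empty_iff]
        rintro k hk ⟨hk₁, hk₂⟩
        rw [hR, Finset.mem_filter] at hk
        apply hc
        have hkM : Nat.Coprime k M := hk.2
        have hck₁ : IsCoprime (k:ℤ) (d₁:ℤ) :=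
          Nat.isCoprime_iff_coprime.mpr (hkM.coprime_dvd_right hd₁M)
        have hck₂ : IsCoprime (k:ℤ) (d₂:ℤ) :=
          Nat.isCoprime_iff_coprime.mpr (hkM.coprime_dvd_right hd₂M)
        refine ⟨?_, ?_, ?_⟩
        · obtain ⟨s, hs⟩ := hk₁
          have hbeq : a₁ = (k:ℤ) + (d₁:ℤ) * (-s) := by linarith [hs]
          rw [← Int.isCoprime_iff_gcd_eq_one, hbeq]
          exact IsCoprime.add_mul_left_left hck₁ (-s)
        · obtain ⟨s, hs⟩ := hk₂
          have hbeq : a₂ = (k:ℤ) + (d₂:ℤ) * (-s) := by linarith [hs]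
          rw [← Int.isCoprime_iff_gcd_eq_one, hbeq]
          exact IsCoprime.add_mul_left_left hck₂ (-s)
        · have hg₁ : ((Nat.gcd d₁ d₂ : ℕ):ℤ) ∣ (k:ℤ) - a₁ :=
            (Int.natCast_dvd_natCast.mpr (Nat.gcd_dvd_left d₁ d₂)).trans hk₁
          have hg₂ : ((Nat.gcd d₁ d₂ : ℕ):ℤ) ∣ (k:ℤ) - a₂ :=
            (Int.natCast_dvd_natCast.mpr (Nat.gcd_dvd_right d₁ d₂)).trans hk₂
          have := dvd_sub hg₂ hg₁
          simpa [sub_sub_sub_cancel_left] using this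
      rw [hempty]
      simp
  -- main calc
  calc ∑ k ∈ R, ((Int.gcd ((k : ℤ) - a₁) m₁ * Int.gcd ((k : ℤ) - a₂) m₂ : ℕ) : ℚ)
      = ∑ k ∈ R, ∑ p ∈ D,
          (if (p.1:ℤ) ∣ (k:ℤ) - a₁ then (Nat.totient p.1 : ℚ) else 0) *
          (if (p.2:ℤ) ∣ (k:ℤ) - a₂ then (Nat.totient p.2 : ℚ) else 0) := by
        refine Finset.sum_congr rfl (fun k _ => ?_)
        rw [gcd_sum_aux m₁ h₁ ((k:ℤ) - a₁), gcd_sum_aux m₂ h₂ ((k:ℤ) - a₂)]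
        push_cast
        rw [Finset.sum_filter, Finset.sum_filter, Finset.sum_mul_sum]
        rw [hD, Finset.sum_product]
    _ = ∑ p ∈ D, ∑ k ∈ R,
          (if (p.1:ℤ) ∣ (k:ℤ) - a₁ then (Nat.totient p.1 : ℚ) else 0) *
          (if (p.2:ℤ) ∣ (k:ℤ) - a₂ then (Nat.totient p.2 : ℚ) else 0) := Finset.sum_comm
    _ = ∑ p ∈ D, if cond p then (Nat.totient (Nat.gcd p.1 p.2) : ℚ) * (Nat.totient M : ℚ) else 0 := by
        refine Finset.sum_congr rfl (fun p hp => ?_)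
        rw [← key p hp]
        have : ∀ k : ℕ, (if (p.1:ℤ) ∣ (k:ℤ) - a₁ then (Nat.totient p.1 : ℚ) else 0) *
            (if (p.2:ℤ) ∣ (k:ℤ) - a₂ then (Nat.totient p.2 : ℚ) else 0)
            = if ((p.1:ℤ) ∣ (k:ℤ) - a₁ ∧ (p.2:ℤ) ∣ (k:ℤ) - a₂)
              then (Nat.totient p.1 : ℚ) * (Nat.totient p.2 : ℚ) else 0 := by
          intro k
          exact ite_zero_mul_ite_zero _ _ _ _
        rw [Finset.sum_congr rfl (fun k _ => this k), ← Finset.sum_filter,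
          Finset.sum_const, nsmul_eq_mul, mul_comm]
    _ = (Nat.totient M : ℚ) * ∑ p ∈ D.filter cond, (Nat.totient (Nat.gcd p.1 p.2) : ℚ) := by
        rw [Finset.mul_sum, Finset.sum_filter]
        refine Finset.sum_congr rfl (fun p _ => ?_)
        split
        · ring
        · ring
end

section
/- Let a ∈ ℤ, let m₁, m₂ ∈ ℕ, m := lcm[m₁, m₂] with gcd(a, m) = 1, and let M ∈ ℕ with m ∣ M. Then ∑_{1 ≤ k ≤ M, gcd(k,M)=1} gcd(k − a, m₁) · gcd(k − a, m₂) = φ(M) · ∑_{d₁ ∣ m₁, d₂ ∣ m₂} φ(gcd(d₁, d₂)). -/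
open Finset


lemma tot_id (d₁ d₂ : ℕ) (h₁ : 0 < d₁) (h₂ : 0 < d₂) :
    Nat.totient d₁ * Nat.totient d₂ =
      Nat.totient (Nat.gcd d₁ d₂) * Nat.totient (Nat.lcm d₁ d₂) := by
  have hg : 0 < Nat.gcd d₁ d₂ := Nat.gcd_pos_of_pos_left _ h₁
  have h1 := Nat.totient_gcd_mul_totient_mul d₁ d₂
  have h2 := Nat.totient_gcd_mul_totient_mul (Nat.gcd d₁ d₂) (Nat.lcm d₁ d₂)
  rw [Nat.gcd_eq_left (dvd_trans (Nat.gcd_dvd_left d₁ d₂) (Nat.dvd_lcm_left d₁ d₂))] at h2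
  rw [← Nat.gcd_mul_lcm d₁ d₂] at h1
  have := h1.symm.trans h2
  exact Nat.eq_of_mul_eq_mul_right hg this

lemma gcd_expand (x : ℤ) (m : ℕ) (hm : m ≠ 0) :
    (Int.gcd x m : ℕ) = ∑ d ∈ m.divisors, if (d : ℤ) ∣ x then Nat.totient d else 0 := by
  have h1 : Int.gcd x m = Nat.gcd x.natAbs m := by
    rw [Int.gcd]; simp
  have h2 : (Nat.gcd x.natAbs m).divisors = m.divisors.filter (fun d : ℕ => (d : ℤ) ∣ x) := by
    ext d
    simp only [Nat.mem_divisors, Finset.mem_filter, Nat.dvd_gcd_iff, Int.natCast_dvd]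
    constructor
    · rintro ⟨⟨hd1, hd2⟩, -⟩; exact ⟨⟨hd2, hm⟩, hd1⟩
    · rintro ⟨⟨hd2, -⟩, hd1⟩
      exact ⟨⟨hd1, hd2⟩, Nat.gcd_ne_zero_right hm⟩
  rw [h1, ← Nat.sum_totient (Nat.gcd x.natAbs m), h2, Finset.sum_filter]


lemma aux_fiber_card {G H : Type*} [Group G] [Group H] [Fintype G] [Fintype H] [DecidableEq H]
    (f : G →* H) (hf : Function.Surjective f) (b : H) :
    (Finset.univ.filter fun g => f g = b).card * Fintype.card H = Fintype.card G := by
  classical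
  have key : ∀ b' : H, (Finset.univ.filter fun g => f g = b').card
      = (Finset.univ.filter fun g => f g = b).card := by
    intro b'
    obtain ⟨u, hu⟩ := hf (b'⁻¹ * b)
    apply Finset.card_bij' (fun g _ => g * u) (fun g _ => g * u⁻¹)
    · intro g hg
      simp only [Finset.mem_filter, Finset.mem_univ, true_and] at hg ⊢
      rw [map_mul, hg, hu]; group
    · intro g hg
      simp only [Finset.mem_filter, Finset.mem_univ, true_and] at hg ⊢
      rw [map_mul, map_inv, hg, hu]; group
    · intro g _; simp
    · intro g _; simp
  have h1 : Fintype.card G = ∑ b' : H, (Finset.univ.filter fun g => f g = b').card := by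
    rw [← Finset.card_univ]
    exact Finset.card_eq_sum_card_fiberwise (fun x _ => Finset.mem_univ (f x))
  rw [h1, Finset.sum_congr rfl (fun b' _ => key b'), Finset.sum_const, Finset.card_univ,
    smul_eq_mul, mul_comm]

lemma count_lemma (a : ℤ) (M L : ℕ) (hM0 : 0 < M) (hL0 : 0 < L) (hLM : L ∣ M)
    (haL : Int.gcd a L = 1) :
    ((Finset.Icc 1 M).filter fun k => Nat.gcd k M = 1 ∧ (L : ℤ) ∣ (k : ℤ) - a).card
      * Nat.totient L = Nat.totient M := by
  classical
  haveI : NeZero M := ⟨hM0.ne'⟩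
  haveI : NeZero L := ⟨hL0.ne'⟩
  have hua : IsUnit ((a : ℤ) : ZMod L) := by
    have hc : IsCoprime a (L : ℤ) := Int.isCoprime_iff_gcd_eq_one.mpr haL
    have := hc.map (Int.castRingHom (ZMod L))
    rw [map_natCast] at this
    rw [ZMod.natCast_self] at this
    exact (isCoprime_zero_right).mp this
  set b : (ZMod L)ˣ := hua.unit with hb
  set f : (ZMod M)ˣ →* (ZMod L)ˣ := ZMod.unitsMap hLM with hfdef
  -- key equivalence of conditions
  have hcond : ∀ (k : ℕ) (h : Nat.Coprime k M),
      (f (ZMod.unitOfCoprime k h) = b ↔ (L : ℤ) ∣ (k : ℤ) - a) := by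
    intro k h
    rw [Units.ext_iff]
    have h1 : (f (ZMod.unitOfCoprime k h) : ZMod L) = ((k : ℤ) : ZMod L) := by
      rw [hfdef, ZMod.unitsMap_def]
      simp [ZMod.coe_unitOfCoprime]
    have h2 : (b : ZMod L) = ((a : ℤ) : ZMod L) := hua.unit_spec
    rw [h1, h2, ZMod.intCast_eq_intCast_iff_dvd_sub]
    exact dvd_sub_comm
  have hcard : ((Finset.Icc 1 M).filter fun k => Nat.gcd k M = 1 ∧ (L : ℤ) ∣ (k : ℤ) - a).card
      = (Finset.univ.filter fun u => f u = b).card := by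
    apply Finset.card_bij (fun k hk => ZMod.unitOfCoprime k
      (by simp only [Finset.mem_filter] at hk; exact hk.2.1))
    · intro k hk
      simp only [Finset.mem_filter, Finset.mem_univ, true_and]
      simp only [Finset.mem_filter] at hk
      exact (hcond k hk.2.1).mpr hk.2.2
    · intro k hk k' hk' heq
      simp only [Finset.mem_filter, Finset.mem_Icc] at hk hk'
      have : ((k : ℕ) : ZMod M) = ((k' : ℕ) : ZMod M) := by
        have := congrArg (fun u : (ZMod M)ˣ => (u : ZMod M)) heq
        simpa [ZMod.coe_unitOfCoprime] using this
      have hmod : (M : ℤ) ∣ (k' : ℤ) - (k : ℤ) := by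
        rw [ZMod.natCast_eq_natCast_iff] at this
        exact this.dvd
      obtain ⟨c, hc⟩ := hmod
      have hk1 := hk.1; have hk2 := hk'.1
      have hMz : (0:ℤ) < M := by exact_mod_cast hM0
      have : c = 0 := by nlinarith [hk1.1, hk1.2, hk2.1, hk2.2,
        (by exact_mod_cast hk1.1 : (1:ℤ) ≤ k), (by exact_mod_cast hk1.2 : (k:ℤ) ≤ M),
        (by exact_mod_cast hk2.1 : (1:ℤ) ≤ k'), (by exact_mod_cast hk2.2 : (k':ℤ) ≤ M)]
      rw [this, mul_zero] at hc
      have : (k' : ℤ) = k := by linarith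
      exact_mod_cast this.symm
    · intro u hu
      simp only [Finset.mem_filter, Finset.mem_univ, true_and] at hu
      set k₀ : ℕ := (u : ZMod M).val with hk₀
      have hcop : Nat.Coprime k₀ M := ZMod.val_coe_unit_coprime u
      have hlt : k₀ < M := ZMod.val_lt _
      set k : ℕ := if k₀ = 0 then M else k₀ with hk
      have hval : ((k₀ : ℕ) : ZMod M) = (u : ZMod M) := ZMod.natCast_rightInverse _
      have hcast : ((k : ℕ) : ZMod M) = (u : ZMod M) := by
        by_cases h0 : k₀ = 0
        · rw [hk, if_pos h0, ZMod.natCast_self, ← hval, h0, Nat.cast_zero]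
        · rw [hk, if_neg h0]; exact hval
      have hcopk : Nat.Coprime k M := by
        by_cases h0 : k₀ = 0
        · have : M = 1 := by simpa [h0, Nat.coprime_zero_left] using hcop
          simp [hk, h0, this]
        · rw [hk, if_neg h0]; exact hcop
      have hmem : k ∈ Finset.Icc 1 M := by
        rw [Finset.mem_Icc, hk]
        split <;> omega
      have huk : ZMod.unitOfCoprime k hcopk = u := by
        ext; rw [ZMod.coe_unitOfCoprime, hcast]
      refine ⟨k, Finset.mem_filter.mpr ⟨hmem, hcopk, ?_⟩, ?_⟩
      · exact (hcond k hcopk).mp (by rw [huk]; exact hu)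
      · rw [Units.ext_iff, ZMod.coe_unitOfCoprime]; exact hcast
  rw [hcard]
  have := aux_fiber_card f (ZMod.unitsMap_surjective hLM) b
  rwa [ZMod.card_units_eq_totient, ZMod.card_units_eq_totient] at this

theorem stmt14 (a : ℤ) (m₁ m₂ : ℕ) (h₁ : 0 < m₁) (h₂ : 0 < m₂)
    (ha : Int.gcd a (Nat.lcm m₁ m₂) = 1)
    (M : ℕ) (hM0 : 0 < M) (hM : Nat.lcm m₁ m₂ ∣ M) :
    ∑ k ∈ (Finset.Icc 1 M).filter (fun k => Nat.gcd k M = 1),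
        Int.gcd ((k : ℤ) - a) m₁ * Int.gcd ((k : ℤ) - a) m₂ =
      Nat.totient M *
        ∑ d₁ ∈ m₁.divisors, ∑ d₂ ∈ m₂.divisors, Nat.totient (Nat.gcd d₁ d₂) := by
  classical
  set K := (Finset.Icc 1 M).filter (fun k => Nat.gcd k M = 1) with hK
  have step1 : ∀ k : ℕ,
      Int.gcd ((k : ℤ) - a) m₁ * Int.gcd ((k : ℤ) - a) m₂ =
        ∑ d₁ ∈ m₁.divisors, ∑ d₂ ∈ m₂.divisors,
          if ((Nat.lcm d₁ d₂ : ℕ) : ℤ) ∣ (k : ℤ) - a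
            then Nat.totient d₁ * Nat.totient d₂ else 0 := by
    intro k
    rw [gcd_expand ((k : ℤ) - a) m₁ h₁.ne', gcd_expand ((k : ℤ) - a) m₂ h₂.ne',
      Finset.sum_mul_sum]
    refine Finset.sum_congr rfl fun d₁ _ => Finset.sum_congr rfl fun d₂ _ => ?_
    have hl : ((Nat.lcm d₁ d₂ : ℕ) : ℤ) ∣ (k : ℤ) - a ↔
        ((d₁ : ℤ) ∣ (k : ℤ) - a ∧ (d₂ : ℤ) ∣ (k : ℤ) - a) := by
      constructor
      · intro h
        exact ⟨(Int.natCast_dvd_natCast.mpr (Nat.dvd_lcm_left _ _)).trans h,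
          (Int.natCast_dvd_natCast.mpr (Nat.dvd_lcm_right _ _)).trans h⟩
      · rintro ⟨hx1, hx2⟩
        exact Int.natCast_dvd.mpr (Nat.lcm_dvd (Int.natCast_dvd.mp hx1) (Int.natCast_dvd.mp hx2))
    rw [ite_zero_mul_ite_zero]
    exact if_congr hl.symm rfl rfl
  rw [Finset.sum_congr rfl fun k _ => step1 k]
  rw [Finset.sum_comm]
  rw [Finset.sum_congr rfl fun d₁ _ => Finset.sum_comm]
  have step2 : ∀ d₁ ∈ m₁.divisors, ∀ d₂ ∈ m₂.divisors,
      (∑ k ∈ K, if ((Nat.lcm d₁ d₂ : ℕ) : ℤ) ∣ (k : ℤ) - a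
          then Nat.totient d₁ * Nat.totient d₂ else 0)
        = Nat.totient (Nat.gcd d₁ d₂) * Nat.totient M := by
    intro d₁ hd₁ d₂ hd₂
    rw [Nat.mem_divisors] at hd₁ hd₂
    have hd₁0 : 0 < d₁ := Nat.pos_of_dvd_of_pos hd₁.1 h₁
    have hd₂0 : 0 < d₂ := Nat.pos_of_dvd_of_pos hd₂.1 h₂
    have hL0 : 0 < Nat.lcm d₁ d₂ := Nat.pos_of_ne_zero (Nat.lcm_ne_zero hd₁0.ne' hd₂0.ne')
    have hLm : Nat.lcm d₁ d₂ ∣ Nat.lcm m₁ m₂ :=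
      Nat.lcm_dvd (hd₁.1.trans (Nat.dvd_lcm_left _ _)) (hd₂.1.trans (Nat.dvd_lcm_right _ _))
    have hLM : Nat.lcm d₁ d₂ ∣ M := hLm.trans hM
    have haL : Int.gcd a (Nat.lcm d₁ d₂) = 1 := by
      have ha' : Nat.Coprime a.natAbs (Nat.lcm m₁ m₂) := by
        rwa [Int.gcd, Int.natAbs_natCast] at ha
      have := Nat.Coprime.coprime_dvd_right hLm ha'
      rw [Int.gcd, Int.natAbs_natCast]
      exact this
    rw [← Finset.sum_filter, Finset.sum_const, smul_eq_mul, hK, Finset.filter_filter]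
    rw [tot_id d₁ d₂ hd₁0 hd₂0, ← mul_assoc, mul_comm _ (Nat.totient (Nat.gcd d₁ d₂)),
      mul_assoc, count_lemma a M (Nat.lcm d₁ d₂) hM0 hL0 hLM haL]
  rw [Finset.sum_congr rfl fun d₁ hd₁ => Finset.sum_congr rfl fun d₂ hd₂ => step2 d₁ hd₁ d₂ hd₂]
  rw [Finset.mul_sum]
  refine Finset.sum_congr rfl fun d₁ _ => ?_
  rw [Finset.mul_sum]
  exact Finset.sum_congr rfl fun d₂ _ => mul_comm _ _
end

section
/- Let r ≥ 1 and m₁,…,m_r ∈ ℕ. The number of cyclic subgroups of the direct product C_{m₁} × ⋯ × C_{m_r} of cyclic groups of orders m₁,…,m_r is given by c(C_{m₁} × ⋯ × C_{m_r}) = ∑_{d₁ ∣ m₁, …, d_r ∣ m_r} φ(d₁) ⋯ φ(d_r) / φ(lcm[d₁,…,d_r]). -/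
open Finset

private lemma pi_addOrderOf {ι : Type*} [Fintype ι] {M : ι → Type*} [∀ i, AddGroup (M i)]
    (f : ∀ i, M i) :
    addOrderOf f = univ.lcm fun i => addOrderOf (f i) := by
  apply Nat.dvd_antisymm
  · apply addOrderOf_dvd_of_nsmul_eq_zero
    funext i
    have : addOrderOf (f i) ∣ univ.lcm fun i => addOrderOf (f i) :=
      Finset.dvd_lcm (mem_univ i)
    simpa using addOrderOf_dvd_iff_nsmul_eq_zero.mp this
  · apply Finset.lcm_dvd
    intro i _
    apply addOrderOf_dvd_of_nsmul_eq_zero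
    have := addOrderOf_nsmul_eq_zero f
    simpa using congrFun this i

private lemma isAddCyclic_zmultiples {G : Type*} [AddGroup G] (g : G) :
    IsAddCyclic (AddSubgroup.zmultiples g) := by
  refine ⟨⟨⟨g, AddSubgroup.mem_zmultiples g⟩, ?_⟩⟩
  rintro ⟨y, hy⟩
  obtain ⟨n, hn⟩ := AddSubgroup.mem_zmultiples_iff.mp hy
  exact AddSubgroup.mem_zmultiples_iff.mpr ⟨n, Subtype.ext (by simpa using hn)⟩

private lemma card_generators {G : Type*} [AddGroup G] [Fintype G]
    [DecidableEq (AddSubgroup G)] (H : AddSubgroup G) (hH : IsAddCyclic H) :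
    (univ.filter fun g : G => AddSubgroup.zmultiples g = H).card = (Nat.card H).totient := by
  classical
  haveI : Fintype H := Fintype.ofFinite _
  have hfilter : (univ.filter fun g : G => AddSubgroup.zmultiples g = H)
      = univ.filter fun g : G => g ∈ H ∧ addOrderOf g = Nat.card H := by
    ext g
    simp only [mem_filter, mem_univ, true_and]
    constructor
    · rintro rfl
      exact ⟨AddSubgroup.mem_zmultiples g, (Nat.card_zmultiples g).symm⟩
    · rintro ⟨hg, hord⟩
      apply AddSubgroup.eq_of_le_of_card_ge (AddSubgroup.zmultiples_le.mpr hg)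
      rw [Nat.card_zmultiples, hord]
  rw [hfilter]
  have hbij : (univ.filter fun g : G => g ∈ H ∧ addOrderOf g = Nat.card H).card
      = (univ.filter fun h : H => addOrderOf h = Nat.card H).card := by
    apply Finset.card_bij (fun g hg => (⟨g, (mem_filter.mp hg).2.1⟩ : H))
    · intro g hg
      simp only [mem_filter, mem_univ, true_and] at hg ⊢
      rw [AddSubgroup.addOrderOf_mk]
      exact hg.2
    · intro a ha b hb hab
      exact congrArg Subtype.val hab
    · rintro ⟨h, hmem⟩ hh
      simp only [mem_filter, mem_univ, true_and] at hh
      have hmem' : h ∈ univ.filter fun g : G => g ∈ H ∧ addOrderOf g = Nat.card H := by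
        simp only [mem_filter, mem_univ, true_and]
        refine ⟨hmem, ?_⟩
        rw [← AddSubgroup.addOrderOf_mk h hmem]
        exact hh
      exact ⟨h, hmem', rfl⟩
  rw [hbij]
  simp only [Nat.card_eq_fintype_card]
  exact IsAddCyclic.card_addOrderOf_eq_totient (dvd_refl _)

theorem stmt16 (r : ℕ) (hr : 1 ≤ r) (m : Fin r → ℕ) (hm : ∀ i, 0 < m i) :
    ((Nat.card {H : AddSubgroup (∀ i, ZMod (m i)) // IsAddCyclic H}) : ℚ) =
      ∑ d ∈ Fintype.piFinset (fun i => (m i).divisors),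
        (∏ i, (Nat.totient (d i) : ℚ)) / (Nat.totient (Finset.univ.lcm d) : ℚ) := by
  classical
  haveI : ∀ i, NeZero (m i) := fun i => ⟨(hm i).ne'⟩
  haveI : Fintype (AddSubgroup (∀ i, ZMod (m i))) := Fintype.ofFinite _
  have himg : (univ : Finset (∀ i, ZMod (m i))).image (fun g => AddSubgroup.zmultiples g)
      = univ.filter (fun H : AddSubgroup (∀ i, ZMod (m i)) => IsAddCyclic H) := by
    ext H
    simp only [mem_image, mem_filter, mem_univ, true_and]
    constructor
    · rintro ⟨g, -, rfl⟩
      exact isAddCyclic_zmultiples g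
    · intro hH
      obtain ⟨⟨x, hx⟩, hgen⟩ := hH.exists_generator
      refine ⟨x, le_antisymm (AddSubgroup.zmultiples_le.mpr hx) ?_⟩
      intro y hy
      obtain ⟨n, hn⟩ := AddSubgroup.mem_zmultiples_iff.mp (hgen ⟨y, hy⟩)
      exact AddSubgroup.mem_zmultiples_iff.mpr ⟨n, congrArg Subtype.val hn⟩
  have key : ∑ g : (∀ i, ZMod (m i)), (1 : ℚ) / ((addOrderOf g).totient : ℚ)
      = ((Nat.card {H : AddSubgroup (∀ i, ZMod (m i)) // IsAddCyclic H}) : ℚ) := by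
    calc ∑ g : (∀ i, ZMod (m i)), (1 : ℚ) / ((addOrderOf g).totient : ℚ)
        = ∑ g : (∀ i, ZMod (m i)),
            (fun H : AddSubgroup (∀ i, ZMod (m i)) => (1 : ℚ) / ((Nat.card H).totient : ℚ))
              (AddSubgroup.zmultiples g) := by
          refine Finset.sum_congr rfl fun g _ => ?_
          simp only [Nat.card_zmultiples]
      _ = ∑ H ∈ (univ : Finset (∀ i, ZMod (m i))).image (fun g => AddSubgroup.zmultiples g),
            (univ.filter fun g : (∀ i, ZMod (m i)) => AddSubgroup.zmultiples g = H).card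
              • ((1 : ℚ) / ((Nat.card H).totient : ℚ)) :=
          Finset.sum_comp (fun H : AddSubgroup (∀ i, ZMod (m i)) =>
            (1 : ℚ) / ((Nat.card H).totient : ℚ)) (fun g => AddSubgroup.zmultiples g)
      _ = ∑ _H ∈ univ.filter (fun H : AddSubgroup (∀ i, ZMod (m i)) => IsAddCyclic H),
            (1 : ℚ) := by
          rw [himg]
          refine Finset.sum_congr rfl fun H hH => ?_
          rw [card_generators H (mem_filter.mp hH).2, nsmul_eq_mul]
          have hpos : (0 : ℚ) < ((Nat.card H).totient : ℚ) := by
            exact_mod_cast Nat.totient_pos.mpr Nat.card_pos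
          field_simp
      _ = ((Nat.card {H : AddSubgroup (∀ i, ZMod (m i)) // IsAddCyclic H}) : ℚ) := by
          rw [Finset.sum_const, nsmul_eq_mul, mul_one]
          norm_cast
          rw [Nat.card_eq_fintype_card, Fintype.card_subtype]
  rw [← key]
  have hmaps : ∀ g : (∀ i, ZMod (m i)), g ∈ (univ : Finset (∀ i, ZMod (m i))) →
      (fun i => addOrderOf (g i)) ∈ Fintype.piFinset (fun i => (m i).divisors) := by
    intro g _
    rw [Fintype.mem_piFinset]
    intro i
    rw [Nat.mem_divisors]
    have h1 : addOrderOf (g i) ∣ Fintype.card (ZMod (m i)) := addOrderOf_dvd_card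
    rw [ZMod.card] at h1
    exact ⟨h1, (hm i).ne'⟩
  rw [← Finset.sum_fiberwise_of_maps_to hmaps]
  refine Finset.sum_congr rfl fun d hd => ?_
  have hfib : (univ.filter fun g : (∀ i, ZMod (m i)) => (fun i => addOrderOf (g i)) = d)
      = Fintype.piFinset (fun i => univ.filter fun x : ZMod (m i) => addOrderOf x = d i) := by
    ext g
    simp [Fintype.mem_piFinset, funext_iff]
  have hcard : (univ.filter fun g : (∀ i, ZMod (m i)) => (fun i => addOrderOf (g i)) = d).card
      = ∏ i, (d i).totient := by
    rw [hfib, Fintype.card_piFinset]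
    refine Finset.prod_congr rfl fun i _ => ?_
    have hdvd : d i ∣ Fintype.card (ZMod (m i)) := by
      rw [ZMod.card]
      exact (Nat.mem_divisors.mp (Fintype.mem_piFinset.mp hd i)).1
    exact IsAddCyclic.card_addOrderOf_eq_totient hdvd
  have hsum : ∑ g ∈ (univ.filter fun g : (∀ i, ZMod (m i)) => (fun i => addOrderOf (g i)) = d),
      (1 : ℚ) / ((addOrderOf g).totient : ℚ)
      = ∑ _g ∈ (univ.filter fun g : (∀ i, ZMod (m i)) => (fun i => addOrderOf (g i)) = d),
          (1 : ℚ) / (((univ.lcm d)).totient : ℚ) := by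
    refine Finset.sum_congr rfl fun g hg => ?_
    have hgd := (mem_filter.mp hg).2
    rw [pi_addOrderOf g, hgd]
  rw [hsum, Finset.sum_const, hcard, nsmul_eq_mul]
  push_cast
  ring
end

section
/- For any prime p and any u, v ∈ ℕ with u ≥ v ≥ 1, the number of cyclic subgroups of C_{p^u} × C_{p^v} equals 2(1 + p + p² + ⋯ + p^{v−1}) + (u − v + 1)·p^v. More generally, for any m₁, m₂ ∈ ℕ, the number of cyclic subgroups of C_{m₁} × C_{m₂} equals ∑_{d₁ ∣ m₁, d₂ ∣ m₂} φ(gcd(d₁, d₂)). -/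
open Finset AddSubgroup

open scoped Classical

private lemma zmult_cyclic {G : Type*} [AddGroup G] (x : G) :
    IsAddCyclic (zmultiples x) := by
  refine ⟨⟨⟨x, mem_zmultiples x⟩, fun y => ?_⟩⟩
  obtain ⟨n, hn⟩ := y.2
  exact ⟨n, Subtype.ext (by simpa using hn)⟩

private lemma exists_zmult {G : Type*} [AddGroup G] {H : AddSubgroup G}
    (h : IsAddCyclic H) : ∃ x : G, zmultiples x = H := by
  obtain ⟨⟨g, hgen⟩⟩ := h
  refine ⟨(g : G), le_antisymm (zmultiples_le.2 g.2) fun y hy => ?_⟩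
  obtain ⟨n, hn⟩ := hgen ⟨y, hy⟩
  exact ⟨n, by simpa using congrArg Subtype.val hn⟩

private lemma card_gen {G : Type*} [AddGroup G] [Fintype G]
    (H : AddSubgroup G) (x : G) (hx : zmultiples x = H) :
    ((univ : Finset G).filter fun y => zmultiples y = H).card
      = Nat.totient (Nat.card H) := by
  haveI : IsAddCyclic H := hx ▸ zmult_cyclic x
  have hmem : ∀ y : G, zmultiples y = H ↔ y ∈ H ∧ addOrderOf y = Nat.card H := by
    intro y
    constructor
    · rintro rfl
      exact ⟨mem_zmultiples y, (Nat.card_zmultiples y).symm⟩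
    · rintro ⟨hy, hord⟩
      exact AddSubgroup.eq_of_le_of_card_ge (zmultiples_le.2 hy)
        (le_of_eq (by rw [Nat.card_zmultiples, hord]))
  have h2 : ((univ : Finset H).filter fun a => addOrderOf a = Fintype.card H).card
      = Nat.totient (Fintype.card H) :=
    IsAddCyclic.card_addOrderOf_eq_totient dvd_rfl
  rw [Nat.card_eq_fintype_card, ← h2]
  refine Finset.card_bij (fun y hy => ⟨y, ((hmem y).1 (mem_filter.1 hy).2).1⟩) ?_ ?_ ?_
  · intro y hy
    have h := (hmem y).1 (mem_filter.1 hy).2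
    simp only [mem_filter, mem_univ, true_and, AddSubgroup.addOrderOf_mk]
    rw [h.2, Nat.card_eq_fintype_card]
  · intro y₁ h₁ y₂ h₂ h
    exact congrArg Subtype.val h
  · intro b hb
    have hb' : addOrderOf (b : G) = Nat.card H := by
      rw [AddSubgroup.addOrderOf_coe, (mem_filter.1 hb).2, Nat.card_eq_fintype_card]
    exact ⟨(b : G), mem_filter.2 ⟨mem_univ _, (hmem _).2 ⟨b.2, hb'⟩⟩, Subtype.ext rfl⟩

private lemma totient_gcd_lcm (a b : ℕ) (ha : 0 < a) :
    Nat.totient (Nat.gcd a b) * Nat.totient (Nat.lcm a b)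
      = Nat.totient a * Nat.totient b := by
  have h1 := Nat.totient_gcd_mul_totient_mul a b
  have h2 := Nat.totient_gcd_mul_totient_mul (Nat.gcd a b) (Nat.lcm a b)
  rw [Nat.gcd_mul_lcm] at h2
  have hg : Nat.gcd (Nat.gcd a b) (Nat.lcm a b) = Nat.gcd a b :=
    Nat.gcd_eq_left ((Nat.gcd_dvd_left a b).trans (Nat.dvd_lcm_left a b))
  rw [hg] at h2
  have hgpos : 0 < Nat.gcd a b := Nat.gcd_pos_of_pos_left _ ha
  exact Nat.eq_of_mul_eq_mul_right hgpos (h2.symm.trans h1)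

private lemma count_fiber (m₁ m₂ : ℕ) [NeZero m₁] [NeZero m₂] (d₁ d₂ : ℕ)
    (hd₁ : d₁ ∣ m₁) (hd₂ : d₂ ∣ m₂) :
    ((univ : Finset (AddSubgroup (ZMod m₁ × ZMod m₂))).filter
      fun H : AddSubgroup (ZMod m₁ × ZMod m₂) =>
        IsAddCyclic H ∧ Nat.card (H.map (AddMonoidHom.fst (ZMod m₁) (ZMod m₂))) = d₁ ∧
          Nat.card (H.map (AddMonoidHom.snd (ZMod m₁) (ZMod m₂))) = d₂).card
      = Nat.totient (Nat.gcd d₁ d₂) := by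
  have hm₁ : 0 < m₁ := Nat.pos_of_ne_zero (NeZero.ne m₁)
  have hm₂ : 0 < m₂ := Nat.pos_of_ne_zero (NeZero.ne m₂)
  have hd₁0 : 0 < d₁ := Nat.pos_of_dvd_of_pos hd₁ hm₁
  have hd₂0 : 0 < d₂ := Nat.pos_of_dvd_of_pos hd₂ hm₂
  set T : Finset (AddSubgroup (ZMod m₁ × ZMod m₂)) :=
    univ.filter (fun H => IsAddCyclic H ∧
      Nat.card (H.map (AddMonoidHom.fst (ZMod m₁) (ZMod m₂))) = d₁ ∧
        Nat.card (H.map (AddMonoidHom.snd (ZMod m₁) (ZMod m₂))) = d₂) with hT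
  set E : Finset (ZMod m₁ × ZMod m₂) :=
    univ.filter (fun x => addOrderOf x.1 = d₁ ∧ addOrderOf x.2 = d₂) with hE
  have hEcard : E.card = Nat.totient d₁ * Nat.totient d₂ := by
    have hsplit : E = (univ.filter fun a : ZMod m₁ => addOrderOf a = d₁) ×ˢ
        (univ.filter fun b : ZMod m₂ => addOrderOf b = d₂) := by
      ext x
      simp [hE, Finset.mem_product]
    have c1 := IsAddCyclic.card_addOrderOf_eq_totient (α := ZMod m₁) (d := d₁)
      (by rw [ZMod.card]; exact hd₁)
    have c2 := IsAddCyclic.card_addOrderOf_eq_totient (α := ZMod m₂) (d := d₂)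
      (by rw [ZMod.card]; exact hd₂)
    rw [hsplit, Finset.card_product, c1, c2]
  have hmap : ∀ x ∈ E, zmultiples x ∈ T := by
    intro x hx
    obtain ⟨h1, h2⟩ := (mem_filter.1 hx).2
    refine mem_filter.2 ⟨mem_univ _, zmult_cyclic x, ?_, ?_⟩
    · rw [AddMonoidHom.map_zmultiples, Nat.card_zmultiples]; exact h1
    · rw [AddMonoidHom.map_zmultiples, Nat.card_zmultiples]; exact h2
  have hfib : ∀ H ∈ T, (E.filter fun x => zmultiples x = H).card
      = Nat.totient (Nat.lcm d₁ d₂) := by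
    intro H hH
    obtain ⟨hc, h1, h2⟩ := (mem_filter.1 hH).2
    obtain ⟨x, hx⟩ := exists_zmult hc
    have hx1 : addOrderOf x.1 = d₁ := by
      rw [← h1, ← hx, AddMonoidHom.map_zmultiples, Nat.card_zmultiples]; rfl
    have hx2 : addOrderOf x.2 = d₂ := by
      rw [← h2, ← hx, AddMonoidHom.map_zmultiples, Nat.card_zmultiples]; rfl
    have hcard : Nat.card H = Nat.lcm d₁ d₂ := by
      rw [← hx, Nat.card_zmultiples, Prod.addOrderOf, hx1, hx2]
    have hfil : (E.filter fun y => zmultiples y = H)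
        = univ.filter (fun y => zmultiples y = H) := by
      ext y
      simp only [hE, mem_filter, mem_univ, true_and]
      constructor
      · rintro ⟨-, h⟩; exact h
      · intro h
        refine ⟨⟨?_, ?_⟩, h⟩
        · rw [← h1, ← h, AddMonoidHom.map_zmultiples, Nat.card_zmultiples]; rfl
        · rw [← h2, ← h, AddMonoidHom.map_zmultiples, Nat.card_zmultiples]; rfl
    rw [hfil, card_gen H x hx, hcard]
  have key : E.card = T.card * Nat.totient (Nat.lcm d₁ d₂) := by
    rw [Finset.card_eq_sum_card_fiberwise hmap, Finset.sum_congr rfl hfib,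
      Finset.sum_const, smul_eq_mul]
  have hlcm : 0 < Nat.lcm d₁ d₂ := Nat.lcm_pos hd₁0 hd₂0
  have : T.card * Nat.totient (Nat.lcm d₁ d₂)
      = Nat.totient (Nat.gcd d₁ d₂) * Nat.totient (Nat.lcm d₁ d₂) := by
    rw [← key, hEcard, totient_gcd_lcm d₁ d₂ hd₁0]
  exact Nat.eq_of_mul_eq_mul_right (Nat.totient_pos.2 hlcm) this

private lemma part2 (m₁ m₂ : ℕ) (h₁ : 0 < m₁) (h₂ : 0 < m₂) :
    Nat.card {H : AddSubgroup (ZMod m₁ × ZMod m₂) // IsAddCyclic H} =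
      ∑ d₁ ∈ m₁.divisors, ∑ d₂ ∈ m₂.divisors, Nat.totient (Nat.gcd d₁ d₂) := by
  haveI : NeZero m₁ := ⟨h₁.ne'⟩
  haveI : NeZero m₂ := ⟨h₂.ne'⟩
  rw [Nat.card_eq_fintype_card, Fintype.card_subtype]
  have hmem : ∀ H ∈ (univ.filter fun H : AddSubgroup (ZMod m₁ × ZMod m₂) => IsAddCyclic H),
      (Nat.card (H.map (AddMonoidHom.fst (ZMod m₁) (ZMod m₂))),
        Nat.card (H.map (AddMonoidHom.snd (ZMod m₁) (ZMod m₂))))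
        ∈ m₁.divisors ×ˢ m₂.divisors := by
    intro H _
    rw [Finset.mem_product, Nat.mem_divisors, Nat.mem_divisors]
    refine ⟨⟨?_, h₁.ne'⟩, ?_, h₂.ne'⟩
    · have := AddSubgroup.card_addSubgroup_dvd_card
        (H.map (AddMonoidHom.fst (ZMod m₁) (ZMod m₂)))
      rwa [Nat.card_zmod] at this
    · have := AddSubgroup.card_addSubgroup_dvd_card
        (H.map (AddMonoidHom.snd (ZMod m₁) (ZMod m₂)))
      rwa [Nat.card_zmod] at this
  rw [Finset.card_eq_sum_card_fiberwise hmem, Finset.sum_product]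
  refine Finset.sum_congr rfl fun d₁ hd₁ => Finset.sum_congr rfl fun d₂ hd₂ => ?_
  rw [← count_fiber m₁ m₂ d₁ d₂ (Nat.mem_divisors.1 hd₁).1 (Nat.mem_divisors.1 hd₂).1]
  congr 1
  rw [Finset.filter_filter]
  apply Finset.filter_congr
  intro H _
  simp [Prod.ext_iff, and_assoc]

private lemma sum_phi_pow (p : ℕ) (hp : p.Prime) (v : ℕ) :
    ∑ j ∈ range (v + 1), Nat.totient (p ^ j) = p ^ v := by
  induction v with
  | zero => simp
  | succ n ih =>
    rw [sum_range_succ, ih, Nat.totient_prime_pow hp n.succ_pos]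
    obtain ⟨q, rfl⟩ : ∃ q, p = q + 1 := ⟨p - 1, by have := hp.pos; omega⟩
    simp [pow_succ]
    ring

private lemma diag_sum (p : ℕ) (hp : p.Prime) (v : ℕ) :
    ∑ i ∈ range (v + 1), ∑ j ∈ range (v + 1), Nat.totient (p ^ min i j) =
      2 * (∑ i ∈ range v, p ^ i) + p ^ v := by
  induction v with
  | zero => simp
  | succ n ih =>
    have hphi : Nat.totient (p ^ (n + 1)) + p ^ n = p ^ (n + 1) := by
      rw [Nat.totient_prime_pow hp n.succ_pos]
      obtain ⟨q, rfl⟩ : ∃ q, p = q + 1 := ⟨p - 1, by have := hp.pos; omega⟩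
      simp [pow_succ]
      ring
    have h1 : ∀ i ∈ range (n + 1),
        ∑ j ∈ range (n + 1 + 1), Nat.totient (p ^ min i j)
          = (∑ j ∈ range (n + 1), Nat.totient (p ^ min i j)) + Nat.totient (p ^ i) := by
      intro i hi
      rw [sum_range_succ, min_eq_left (by have := mem_range.1 hi; omega)]
    have h2 : ∑ j ∈ range (n + 1 + 1), Nat.totient (p ^ min (n + 1) j)
        = p ^ n + Nat.totient (p ^ (n + 1)) := by
      rw [sum_range_succ, min_self, ← sum_phi_pow p hp n]
      congr 1
      refine Finset.sum_congr rfl fun j hj => ?_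
      rw [min_eq_right (by have := mem_range.1 hj; omega)]
    rw [sum_range_succ, Finset.sum_congr rfl h1, Finset.sum_add_distrib,
      sum_phi_pow p hp n, h2, ih, sum_range_succ]
    omega

private lemma double_sum (p : ℕ) (hp : p.Prime) (v d : ℕ) :
    ∑ i ∈ range (v + d + 1), ∑ j ∈ range (v + 1), Nat.totient (p ^ min i j) =
      2 * (∑ i ∈ range v, p ^ i) + (d + 1) * p ^ v := by
  induction d with
  | zero => simpa using diag_sum p hp v
  | succ n ih =>
    have hst : v + (n + 1) + 1 = (v + n + 1) + 1 := by ring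
    rw [hst, sum_range_succ, ih]
    have hrow : ∑ j ∈ range (v + 1), Nat.totient (p ^ min (v + n + 1) j) = p ^ v := by
      rw [← sum_phi_pow p hp v]
      refine Finset.sum_congr rfl fun j hj => ?_
      rw [min_eq_right]
      have := mem_range.1 hj
      omega
    rw [hrow]
    ring

theorem stmt17 :
    (∀ (p u v : ℕ), p.Prime → 1 ≤ v → v ≤ u →
      Nat.card {H : AddSubgroup (ZMod (p ^ u) × ZMod (p ^ v)) // IsAddCyclic H} =
        2 * (∑ i ∈ Finset.range v, p ^ i) + (u - v + 1) * p ^ v) ∧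
    (∀ (m₁ m₂ : ℕ), 0 < m₁ → 0 < m₂ →
      Nat.card {H : AddSubgroup (ZMod m₁ × ZMod m₂) // IsAddCyclic H} =
        ∑ d₁ ∈ m₁.divisors, ∑ d₂ ∈ m₂.divisors, Nat.totient (Nat.gcd d₁ d₂)) := by
  constructor
  · intro p u v hp _ huv
    rw [part2 (p ^ u) (p ^ v) (pow_pos hp.pos u) (pow_pos hp.pos v)]
    simp only [Nat.divisors_prime_pow hp, Finset.sum_map, Function.Embedding.coeFn_mk]
    have hg : ∀ i j : ℕ, Nat.gcd (p ^ i) (p ^ j) = p ^ min i j := by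
      intro i j
      rcases le_total i j with h | h
      · rw [Nat.gcd_eq_left (pow_dvd_pow p h), min_eq_left h]
      · rw [Nat.gcd_eq_right (pow_dvd_pow p h), min_eq_right h]
    simp only [hg]
    obtain ⟨d, rfl⟩ : ∃ d, u = v + d := ⟨u - v, by omega⟩
    rw [show v + d - v + 1 = d + 1 by omega]
    exact double_sum p hp v d
  · exact part2
end

section
/- Let j ∈ ℕ. For every n ∈ ℕ, (1/n) · ∑_{k=1}^{n} gcd(k^j, n) = ∑_{d ∣ n} φ(d) · N^{(j)}(d) / d, where N^{(j)} is the multiplicative function determined by N^{(j)}(p^a) = p^{⌊(j−1)a/j⌋} for every prime power p^a (a ≥ 1) and N^{(j)}(1) = 1. -/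
open Finset

/-- The multiplicative function `N^{(j)}` determined by
`N^{(j)}(p^a) = p^{⌊(j-1)a/j⌋}` on prime powers and `N^{(j)}(1) = 1`. -/
def Nj (j d : ℕ) : ℕ :=
  d.factorization.prod fun p a => p ^ ((j - 1) * a / j)

/-- Auxiliary: `e_j(d) = ∏ p^⌈a/j⌉`. -/
def ej (j d : ℕ) : ℕ :=
  d.factorization.prod fun p a => p ^ ((a + j - 1) / j)

lemma ceil_add_floor (j a : ℕ) (hj : 1 ≤ j) : (a + j - 1) / j + (j - 1) * a / j = a := by
  obtain ⟨q, r, hr, rfl⟩ : ∃ q r, r < j ∧ a = j * q + r :=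
    ⟨a / j, a % j, Nat.mod_lt _ hj, (Nat.div_add_mod a j).symm⟩
  have h1 : (j * q + r + j - 1) / j = q + (r + j - 1) / j := by
    rw [show j * q + r + j - 1 = j * q + (r + j - 1) by omega, Nat.mul_add_div hj]
  have h2 : (j - 1) * (j * q + r) / j = (j - 1) * q + (j - 1) * r / j := by
    rw [show (j - 1) * (j * q + r) = j * ((j - 1) * q) + (j - 1) * r by
      cases' Nat.exists_eq_add_of_le hj with c hc; subst hc; ring, Nat.mul_add_div hj]
  have hjq : j * q = (j - 1) * q + q := by
    rcases j with _ | j'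
    · omega
    · simp [Nat.succ_mul]
  rcases Nat.eq_zero_or_pos r with h0 | h1'
  · subst h0
    have e0 : (0 + j - 1) / j = 0 := Nat.div_eq_of_lt (by omega)
    rw [h1, h2, e0]
    simp only [Nat.mul_zero, Nat.zero_div]
    omega
  · have e1 : (r + j - 1) / j = 1 := Nat.div_eq_of_lt_le (by omega) (by omega)
    have e2 : (j - 1) * r / j = r - 1 := by
      obtain ⟨c, rfl⟩ : ∃ c, j = c + 1 := ⟨j - 1, by omega⟩
      obtain ⟨s, rfl⟩ : ∃ s, r = s + 1 := ⟨r - 1, by omega⟩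
      simp only [Nat.add_sub_cancel]
      apply Nat.div_eq_of_lt_le
      · nlinarith
      · nlinarith
    rw [h1, h2, e1, e2]
    omega

lemma ej_mul_Nj (j : ℕ) (hj : 1 ≤ j) (d : ℕ) (hd : d ≠ 0) : ej j d * Nj j d = d := by
  unfold ej Nj
  rw [Finsupp.prod, Finsupp.prod, ← Finset.prod_mul_distrib]
  conv_rhs => rw [← Nat.factorization_prod_pow_eq_self hd]
  rw [Finsupp.prod]
  exact Finset.prod_congr rfl fun p _ => by rw [← pow_add, ceil_add_floor j _ hj]

lemma ej_pos (j d : ℕ) (hd : d ≠ 0) : 0 < ej j d := by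
  unfold ej
  apply Finset.prod_pos
  intro p hp
  exact pow_pos (Nat.prime_of_mem_primeFactors (by simpa using hp)).pos _

lemma ceil_le_iff (j a v : ℕ) (hj : 1 ≤ j) : (a + j - 1) / j ≤ v ↔ a ≤ j * v := by
  rw [Nat.div_le_iff_le_mul_add_pred hj]
  omega

lemma dvd_pow_iff_ej_dvd (j : ℕ) (hj : 1 ≤ j) (d : ℕ) (hd : d ≠ 0) (x : ℕ) :
    d ∣ x ^ j ↔ ej j d ∣ x := by
  rcases Nat.eq_zero_or_pos x with rfl | hx
  · simp [zero_pow (by omega : j ≠ 0)]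
  have hx' : x ≠ 0 := hx.ne'
  have hxj : x ^ j ≠ 0 := pow_ne_zero _ hx'
  set f : ℕ →₀ ℕ := Finsupp.mapRange (fun a => (a + j - 1) / j)
    (Nat.div_eq_of_lt (by omega)) d.factorization with hf
  have hejf : ej j d = f.prod (· ^ ·) := by
    rw [hf, Finsupp.prod_mapRange_index (fun p => pow_zero p)]
    rfl
  have hfact : (ej j d).factorization = f := by
    rw [hejf]
    apply Nat.prod_pow_factorization_eq_self
    intro p hp
    have : p ∈ d.factorization.support := Finsupp.support_mapRange hp
    exact Nat.prime_of_mem_primeFactors (by simpa using this)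
  have hej0 : ej j d ≠ 0 := (ej_pos j d hd).ne'
  rw [← Nat.factorization_le_iff_dvd hd hxj, ← Nat.factorization_le_iff_dvd hej0 hx',
    hfact, Nat.factorization_pow, Finsupp.le_def, Finsupp.le_def]
  constructor
  · intro h p
    have := h p
    simp only [Finsupp.smul_apply, smul_eq_mul] at this
    rw [hf, Finsupp.mapRange_apply]
    exact (ceil_le_iff j _ _ hj).2 this
  · intro h p
    have := h p
    rw [hf, Finsupp.mapRange_apply] at this
    simp only [Finsupp.smul_apply, smul_eq_mul]
    exact (ceil_le_iff j _ _ hj).1 this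

theorem stmt18 (j : ℕ) (hj : 1 ≤ j) (n : ℕ) (hn : 0 < n) :
    (1 / (n : ℚ)) * ∑ k ∈ Finset.Icc 1 n, (Nat.gcd (k ^ j) n : ℚ) =
      ∑ d ∈ n.divisors, (Nat.totient d : ℚ) * (Nj j d : ℚ) / (d : ℚ) := by
  have hn0 : n ≠ 0 := hn.ne'
  have key : ∑ k ∈ Finset.Icc 1 n, Nat.gcd (k ^ j) n
      = ∑ d ∈ n.divisors, Nat.totient d * (n / d * Nj j d) := by
    have step1 : ∀ k, Nat.gcd (k ^ j) n
        = ∑ d ∈ n.divisors.filter (· ∣ k ^ j), Nat.totient d := by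
      intro k
      conv_lhs => rw [← Nat.sum_totient (Nat.gcd (k ^ j) n)]
      apply Finset.sum_congr _ fun _ _ => rfl
      ext d
      simp only [Nat.mem_divisors, Finset.mem_filter]
      constructor
      · rintro ⟨hd, -⟩
        exact ⟨⟨hd.trans (Nat.gcd_dvd_right _ _), hn0⟩, hd.trans (Nat.gcd_dvd_left _ _)⟩
      · rintro ⟨⟨hdn, -⟩, hdk⟩
        exact ⟨Nat.dvd_gcd hdk hdn, Nat.gcd_ne_zero_right hn0⟩
    calc ∑ k ∈ Finset.Icc 1 n, Nat.gcd (k ^ j) n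
        = ∑ k ∈ Finset.Icc 1 n, ∑ d ∈ n.divisors,
            if d ∣ k ^ j then Nat.totient d else 0 := by
          refine Finset.sum_congr rfl fun k _ => ?_
          rw [step1 k, Finset.sum_filter]
      _ = ∑ d ∈ n.divisors, Nat.totient d *
            ((Finset.Icc 1 n).filter fun k => d ∣ k ^ j).card := by
          rw [Finset.sum_comm]
          refine Finset.sum_congr rfl fun d _ => ?_
          rw [← Finset.sum_filter, Finset.sum_const, smul_eq_mul, mul_comm]
      _ = ∑ d ∈ n.divisors, Nat.totient d * (n / d * Nj j d) := by
          refine Finset.sum_congr rfl fun d hd => ?_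
          obtain ⟨hdn, -⟩ := Nat.mem_divisors.1 hd
          have hd0 : d ≠ 0 := fun h => hn0 (by simpa [h] using hdn)
          congr 1
          have hfilter : ((Finset.Icc 1 n).filter fun k => d ∣ k ^ j)
              = (Finset.Icc 1 n).filter fun k => ej j d ∣ k := by
            apply Finset.filter_congr
            intro k _
            simp [dvd_pow_iff_ej_dvd j hj d hd0 k]
          rw [hfilter, show Finset.Icc 1 n = Finset.Ioc 0 n by rw [← Finset.Icc_add_one_left_eq_Ioc]; rfl,
            Nat.Ioc_filter_dvd_card_eq_div]
          -- n / ej j d = n / d * Nj j d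
          obtain ⟨m, hm⟩ := hdn
          have hed := ej_mul_Nj j hj d hd0
          have hepos := ej_pos j d hd0
          have hNpos : 0 < Nj j d := by
            rcases Nat.eq_zero_or_pos (Nj j d) with h0 | h
            · exfalso; apply hd0; rw [← hed, h0, mul_zero]
            · exact h
          have h1 : n / ej j d = Nj j d * m := by
            have hne : n = ej j d * (Nj j d * m) := by rw [← mul_assoc, hed, hm]
            rw [hne, Nat.mul_div_cancel_left _ hepos]
          have h2 : n / d = m := by
            rw [hm, Nat.mul_div_cancel_left _ (Nat.pos_of_ne_zero hd0)]
          rw [h1, h2]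
          ring
  rw [← Nat.cast_sum, key, Nat.cast_sum, Finset.mul_sum]
  refine Finset.sum_congr rfl fun d hd => ?_
  obtain ⟨hdn, -⟩ := Nat.mem_divisors.1 hd
  have hd0 : d ≠ 0 := fun h => hn0 (by simpa [h] using hdn)
  have hcast : ((n / d : ℕ) : ℚ) = (n : ℚ) / d := by
    rw [Nat.cast_div hdn (by exact_mod_cast hd0)]
  push_cast [hcast]
  have hnq : (n : ℚ) ≠ 0 := by exact_mod_cast hn0
  have hdq : (d : ℚ) ≠ 0 := by exact_mod_cast hd0
  field_simp
end
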